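/- Let ω = (a_1/b_1, …, a_d/b_d) ∈ ℚ^d be rational and let (p_1,q_1),…,(p_d,q_d) ∈ ℤ^d × ℤ be linearly independent with ⟨ω, p_j⟩ + q_j = 0 for all j. Write n := |det p| where p is the matrix with columns p_j. If x : ℤ^d → ℝ satisfies τ_{p_j,q_j}x = x for all j, then for every (k,l) ∈ ℤ^d × ℤ with ⟨ω,k⟩ + l ≠ 0 one has Σ_{i ∈ B_p} |(τ_{k,l}x − x)_i| ≥ 1, where B_p := p([0,1)^d) ∩ ℤ^d. -/

import Mathlib

open scoped BigOperators

/-- The shift operator `(τ_{k,l} x)_i = x_{i+k} + l`. -/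
def tau {d : ℕ} (k : Fin d → ℤ) (l : ℤ) (x : (Fin d → ℤ) → ℝ) : (Fin d → ℤ) → ℝ :=
  fun i => x (i + k) + l

/-- A configuration is Birkhoff if every integer shift is pointwise comparable to it. -/
def IsBirkhoff {d : ℕ} (x : (Fin d → ℤ) → ℝ) : Prop :=
  ∀ (k : Fin d → ℤ) (l : ℤ), tau k l x ≤ x ∨ x ≤ tau k l x

/-- `x` has rotation vector `ω` : `lim_{n→∞} x_{ni}/n = ⟨ω,i⟩` for all `i`. -/
def HasRotVec {d : ℕ} (x : (Fin d → ℤ) → ℝ) (ω : Fin d → ℝ) : Prop :=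
  ∀ i : Fin d → ℤ, Filter.Tendsto (fun n : ℕ => x ((n : ℤ) • i) / n) Filter.atTop
    (nhds (∑ k, ω k * (i k : ℝ)))


theorem stmt7 {d : ℕ} (ω : Fin d → ℝ) (hrat : ∀ k, ∃ r : ℚ, ω k = (r : ℝ))
    (p : Matrix (Fin d) (Fin d) ℤ) (q : Fin d → ℤ)
    (hind : LinearIndependent ℤ (fun j => ((fun k => p k j, q j) : (Fin d → ℤ) × ℤ)))
    (hI : ∀ j, (∑ k, ω k * (p k j : ℝ)) + (q j : ℝ) = 0)
    (B : Finset (Fin d → ℤ))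
    (hB : ∀ i : Fin d → ℤ, i ∈ B ↔ ∃ t : Fin d → ℝ,
      (∀ m, 0 ≤ t m ∧ t m < 1) ∧ ∀ m, (i m : ℝ) = ∑ j, (p m j : ℝ) * t j)
    (x : (Fin d → ℤ) → ℝ) (hper : ∀ j, tau (fun k => p k j) (q j) x = x)
    (k : Fin d → ℤ) (l : ℤ) (hkl : (∑ m, ω m * (k m : ℝ)) + (l : ℝ) ≠ 0) :
    1 ≤ ∑ i ∈ B, |tau k l x i - x i| := by
  classical
  -- Step 1: det p ≠ 0
  have hdet : p.det ≠ 0 := by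
    intro h
    obtain ⟨c, hc0, hc⟩ := (Matrix.exists_mulVec_eq_zero_iff).2 h
    have hcol : ∀ m, (∑ j, (p m j : ℝ) * (c j : ℝ)) = 0 := by
      intro m
      have h1 : p.mulVec c m = 0 := by rw [hc]; rfl
      have : ((p.mulVec c m : ℤ) : ℝ) = 0 := by exact_mod_cast h1
      simpa [Matrix.mulVec, dotProduct] using this
    have hq : ∑ j, c j * q j = 0 := by
      have hre : ((∑ j, c j * q j : ℤ) : ℝ) = 0 := by
        push_cast
        have : ∑ j, (c j : ℝ) * (q j : ℝ)
            = ∑ j, (c j : ℝ) * (-(∑ m, ω m * (p m j : ℝ))) := by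
          refine Finset.sum_congr rfl fun j _ => ?_
          have := hI j; rw [show ((q j : ℝ)) = -(∑ m, ω m * (p m j : ℝ)) by linarith]
        rw [this]
        have : ∑ j, (c j : ℝ) * (-(∑ m, ω m * (p m j : ℝ)))
            = -∑ m, ω m * (∑ j, (p m j : ℝ) * (c j : ℝ)) := by
          simp_rw [mul_neg, Finset.sum_neg_distrib, neg_inj, Finset.mul_sum]
          rw [Finset.sum_comm]
          refine Finset.sum_congr rfl fun j _ => Finset.sum_congr rfl fun m _ => by ring
        rw [this]
        simp [hcol]
      exact_mod_cast hre
    have hzero : (∑ j, c j • ((fun k => p k j, q j) : (Fin d → ℤ) × ℤ)) = 0 := by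
      rw [Prod.ext_iff]
      constructor
      · show (∑ j, c j • ((fun k => p k j, q j) : (Fin d → ℤ) × ℤ)).1 = 0
        rw [Prod.fst_sum]
        simp only [Prod.smul_mk]
        funext m
        simp only [Finset.sum_apply, Pi.smul_apply, smul_eq_mul, Pi.zero_apply]
        have h1 : p.mulVec c m = 0 := by rw [hc]; rfl
        simpa [Matrix.mulVec, dotProduct, mul_comm] using h1
      · show (∑ j, c j • ((fun k => p k j, q j) : (Fin d → ℤ) × ℤ)).2 = 0
        rw [Prod.snd_sum]
        simpa [smul_eq_mul] using hq
    have := Fintype.linearIndependent_iff.mp hind c hzero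
    exact hc0 (funext fun j => this j)
  -- the real matrix
  set P : Matrix (Fin d) (Fin d) ℝ := p.map (Int.cast : ℤ → ℝ) with hPdef
  have hPdet : P.det ≠ 0 := by
    have h2 : P.det = ((p.det : ℤ) : ℝ) :=
      (RingHom.map_det (Int.castRingHom ℝ) p).symm
    rw [h2]
    exact_mod_cast hdet
  have hPunit : IsUnit P.det := isUnit_iff_ne_zero.2 hPdet
  have hPinj : ∀ a b : Fin d → ℝ, P.mulVec a = P.mulVec b → a = b := by
    intro a b hab
    have ha : P⁻¹.mulVec (P.mulVec a) = a := by
      rw [Matrix.mulVec_mulVec, Matrix.nonsing_inv_mul P hPunit, Matrix.one_mulVec]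
    have hb : P⁻¹.mulVec (P.mulVec b) = b := by
      rw [Matrix.mulVec_mulVec, Matrix.nonsing_inv_mul P hPunit, Matrix.one_mulVec]
    rw [← ha, ← hb, hab]
  -- casting mulVec
  have hcast : ∀ (v : Fin d → ℤ) (m : Fin d), ((p.mulVec v m : ℤ) : ℝ)
      = P.mulVec (fun j => (v j : ℝ)) m := by
    intro v m
    simp [Matrix.mulVec, dotProduct, hPdef, Matrix.map_apply]
  -- membership reformulation
  have hBmem : ∀ i : Fin d → ℤ, i ∈ B ↔ ∃ t : Fin d → ℝ,
      (∀ m, 0 ≤ t m ∧ t m < 1) ∧ (fun m => (i m : ℝ)) = P.mulVec t := by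
    intro i
    rw [hB i]
    constructor
    · rintro ⟨t, ht, hti⟩
      exact ⟨t, ht, funext fun m => by
        rw [hti m]; simp [Matrix.mulVec, dotProduct, hPdef, Matrix.map_apply]⟩
    · rintro ⟨t, ht, hti⟩
      refine ⟨t, ht, fun m => ?_⟩
      have := congrFun hti m
      simpa [Matrix.mulVec, dotProduct, hPdef, Matrix.map_apply] using this
  -- existence of decomposition
  have hex : ∀ v : Fin d → ℤ, ∃ b m_ : Fin d → ℤ, b ∈ B ∧ v = b + p.mulVec m_ := by
    intro v
    set s : Fin d → ℝ := P⁻¹.mulVec (fun m => (v m : ℝ)) with hs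
    have hPs : P.mulVec s = fun m => (v m : ℝ) := by
      rw [hs, Matrix.mulVec_mulVec, Matrix.mul_nonsing_inv P hPunit, Matrix.one_mulVec]
    refine ⟨v - p.mulVec (fun j => ⌊s j⌋), fun j => ⌊s j⌋, ?_, by abel⟩
    rw [hBmem]
    refine ⟨fun j => Int.fract (s j), fun m => ⟨Int.fract_nonneg _, Int.fract_lt_one _⟩, ?_⟩
    funext m
    have e1 : ((v - p.mulVec fun j => ⌊s j⌋) m : ℝ)
        = (v m : ℝ) - ((p.mulVec fun j => ⌊s j⌋) m : ℝ) := by push_cast [Pi.sub_apply]; ring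
    rw [e1, hcast]
    have e4 : (fun j => Int.fract (s j)) = s - fun j => ((⌊s j⌋ : ℤ) : ℝ) := by
      funext j; rfl
    have e2 : P.mulVec (fun j => Int.fract (s j))
        = P.mulVec s - P.mulVec (fun j => ((⌊s j⌋ : ℤ) : ℝ)) := by
      rw [e4, Matrix.mulVec_sub]
    rw [e2]
    have e3 := congrFun hPs m
    simp [Pi.sub_apply, e3]
  -- uniqueness
  have huniq : ∀ b ∈ B, ∀ b' ∈ B, ∀ m m' : Fin d → ℤ,
      b + p.mulVec m = b' + p.mulVec m' → b = b' := by
    intro b hb b' hb' m m' heq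
    obtain ⟨t, ht, htb⟩ := (hBmem b).1 hb
    obtain ⟨t', ht', htb'⟩ := (hBmem b').1 hb'
    have hre : P.mulVec (t + fun j => (m j : ℝ)) = P.mulVec (t' + fun j => (m' j : ℝ)) := by
      rw [Matrix.mulVec_add, Matrix.mulVec_add, ← htb, ← htb']
      funext mm
      have := congrFun heq mm
      have h2 : ((b mm + p.mulVec m mm : ℤ) : ℝ) = ((b' mm + p.mulVec m' mm : ℤ) : ℝ) := by
        exact_mod_cast congrArg (fun z => ((z : ℤ) : ℝ)) (by simpa [Pi.add_apply] using this)
      push_cast at h2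
      simp only [Pi.add_apply]
      rw [← hcast, ← hcast]
      exact h2
    have hsame := hPinj _ _ hre
    have hm : m = m' := by
      funext j
      have hj := congrFun hsame j
      simp only [Pi.add_apply] at hj
      have h1 : (m' j : ℝ) - (m j : ℝ) = t j - t' j := by linarith
      have hb1 : (-1 : ℝ) < (m' j : ℝ) - (m j : ℝ) := by
        rw [h1]; have := (ht j).1; have := (ht j).2; have := (ht' j).1; have := (ht' j).2; linarith
      have hb2 : (m' j : ℝ) - (m j : ℝ) < 1 := by
        rw [h1]; have := (ht j).1; have := (ht j).2; have := (ht' j).1; have := (ht' j).2; linarith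
      have : m' j - m j = 0 := by
        have hb1' : (-1 : ℤ) < m' j - m j := by exact_mod_cast (by push_cast; linarith : ((-1:ℤ):ℝ) < ((m' j - m j : ℤ) : ℝ))
        have hb2' : m' j - m j < 1 := by exact_mod_cast (by push_cast; linarith : (((m' j - m j : ℤ)) : ℝ) < ((1:ℤ):ℝ))
        omega
      omega
    rw [hm] at heq
    exact add_right_cancel heq
  choose red lat hred hdec using hex
  -- invariance of red under lattice translation
  have hinv : ∀ (v : Fin d → ℤ) (m : Fin d → ℤ), red (v + p.mulVec m) = red v := by
    intro v m
    refine huniq _ (hred _) _ (hred _) (lat (v + p.mulVec m)) (lat v + m) ?_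
    rw [← hdec, Matrix.mulVec_add]
    have := hdec v
    rw [show red v + (p.mulVec (lat v) + p.mulVec m) = (red v + p.mulVec (lat v)) + p.mulVec m by abel, ← this]
  have hid : ∀ b ∈ B, red b = b := by
    intro b hb
    refine huniq _ (hred _) _ hb (lat b) 0 ?_
    rw [← hdec, Matrix.mulVec_zero, add_zero]
  -- bijection sum lemma
  have hred_eq : ∀ v : Fin d → ℤ, red v = v - p.mulVec (lat v) := fun v =>
    eq_sub_of_add_eq (hdec v).symm
  have hbij : ∀ h : (Fin d → ℤ) → ℝ, ∑ i ∈ B, h (red (i + k)) = ∑ i ∈ B, h i := by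
    intro h
    refine Finset.sum_bij' (fun b _ => red (b + k)) (fun b _ => red (b - k))
      (fun b hb => hred _) (fun b hb => hred _) ?_ ?_ (fun a ha => rfl)
    · intro b hb
      show red (red (b + k) - k) = b
      have h1 : red (b + k) - k = b + p.mulVec (-(lat (b + k))) := by
        rw [hred_eq (b + k), Matrix.mulVec_neg]; abel
      rw [h1, hinv, hid b hb]
    · intro b hb
      show red (red (b - k) + k) = b
      have h1 : red (b - k) + k = b + p.mulVec (-(lat (b - k))) := by
        rw [hred_eq (b - k), Matrix.mulVec_neg]; abel
      rw [h1, hinv, hid b hb]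
  -- periodicity
  have hstep : ∀ (v : Fin d → ℤ) (j : Fin d), x (v + fun k' => p k' j) = x v - (q j : ℝ) := by
    intro v j
    have := congrFun (hper j) v
    simp only [tau] at this
    linarith
  have hz : ∀ (n : ℤ) (j : Fin d) (v : Fin d → ℤ),
      x (v + n • fun k' => p k' j) = x v - (n : ℝ) * (q j : ℝ) := by
    intro n j
    induction n using Int.induction_on with
    | zero => intro v; simp
    | succ n ih =>
        intro v
        have h1 : v + ((n : ℤ) + 1) • (fun k' => p k' j)
            = (v + fun k' => p k' j) + (n : ℤ) • (fun k' => p k' j) := by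
          rw [add_smul, one_smul]; abel
        rw [h1, ih, hstep]
        push_cast; ring
    | pred n ih =>
        intro v
        have h1 : (v + (-(n : ℤ) - 1) • (fun k' => p k' j)) + (fun k' => p k' j)
            = v + (-(n : ℤ)) • (fun k' => p k' j) := by
          simp only [sub_smul, one_smul, neg_smul]; abel
        have h2 := hstep (v + (-(n : ℤ) - 1) • fun k' => p k' j) j
        rw [h1, ih] at h2
        push_cast at h2 ⊢
        linarith
  have hmul_rep : ∀ m : Fin d → ℤ, p.mulVec m = ∑ j, m j • fun k' => p k' j := by
    intro m
    funext k'
    simp [Matrix.mulVec, dotProduct, Finset.sum_apply, mul_comm]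
  have hsum : ∀ (s : Finset (Fin d)) (m : Fin d → ℤ) (v : Fin d → ℤ),
      x (v + ∑ j ∈ s, m j • fun k' => p k' j) = x v - ∑ j ∈ s, (q j : ℝ) * (m j : ℝ) := by
    intro s
    induction s using Finset.induction with
    | empty => intro m v; simp
    | insert a s' hnotmem ih =>
        intro m v
        rw [Finset.sum_insert hnotmem, Finset.sum_insert hnotmem]
        have h1 : v + (m a • (fun k' => p k' a) + ∑ j ∈ s', m j • fun k' => p k' j)
            = (v + m a • fun k' => p k' a) + ∑ j ∈ s', m j • fun k' => p k' j := by abel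
        rw [h1, ih, hz]
        ring
  have hlat : ∀ (v : Fin d → ℤ) (m : Fin d → ℤ),
      x (v + p.mulVec m) = x v - ∑ j, (q j : ℝ) * (m j : ℝ) := by
    intro v m
    rw [hmul_rep m]
    exact hsum Finset.univ m v
  -- inner product with ω
  set W : (Fin d → ℤ) → ℝ := fun v => ∑ m', ω m' * (v m' : ℝ) with hWdef
  have hWadd : ∀ v w : Fin d → ℤ, W (v + w) = W v + W w := by
    intro v w
    simp only [hWdef, Pi.add_apply, Int.cast_add, mul_add, Finset.sum_add_distrib]
  have hWlat : ∀ m : Fin d → ℤ, W (p.mulVec m) = -∑ j, (q j : ℝ) * (m j : ℝ) := by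
    intro m
    simp only [hWdef]
    have h1 : ∀ m', ((p.mulVec m m' : ℤ) : ℝ) = ∑ j, (p m' j : ℝ) * (m j : ℝ) := by
      intro m'
      simp [Matrix.mulVec, dotProduct]
    calc ∑ m', ω m' * ((p.mulVec m m' : ℤ) : ℝ)
        = ∑ m', ∑ j, ω m' * ((p m' j : ℝ) * (m j : ℝ)) := by
          refine Finset.sum_congr rfl fun m' _ => ?_
          rw [h1, Finset.mul_sum]
      _ = ∑ j, (∑ m', ω m' * (p m' j : ℝ)) * (m j : ℝ) := by
          rw [Finset.sum_comm]
          refine Finset.sum_congr rfl fun j _ => ?_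
          rw [Finset.sum_mul]
          refine Finset.sum_congr rfl fun m' _ => by ring
      _ = ∑ j, (-(q j : ℝ)) * (m j : ℝ) := by
          refine Finset.sum_congr rfl fun j _ => ?_
          have := hI j
          rw [show (∑ m', ω m' * (p m' j : ℝ)) = -(q j : ℝ) by linarith]
      _ = -∑ j, (q j : ℝ) * (m j : ℝ) := by
          simp [neg_mul, Finset.sum_neg_distrib]
  -- key pointwise identity
  have hkey : ∀ i : Fin d → ℤ, tau k l x i - x i
      = (x (red (i + k)) - x i) + ((l : ℝ) - ∑ j, (q j : ℝ) * ((lat (i + k)) j : ℝ)) := by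
    intro i
    simp only [tau]
    have hx : x (i + k) = x (red (i + k)) - ∑ j, (q j : ℝ) * ((lat (i + k)) j : ℝ) := by
      have h2 := hlat (red (i + k)) (lat (i + k))
      rw [← hdec (i + k)] at h2
      exact h2
    rw [hx]
    ring
  -- the sum S
  have hS : ∑ i ∈ B, (tau k l x i - x i)
      = ∑ i ∈ B, ((l : ℝ) - ∑ j, (q j : ℝ) * ((lat (i + k)) j : ℝ)) := by
    calc ∑ i ∈ B, (tau k l x i - x i)
        = ∑ i ∈ B, ((x (red (i + k)) - x i)
            + ((l : ℝ) - ∑ j, (q j : ℝ) * ((lat (i + k)) j : ℝ))) :=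
          Finset.sum_congr rfl fun i _ => hkey i
      _ = (∑ i ∈ B, x (red (i + k)) - ∑ i ∈ B, x i)
            + ∑ i ∈ B, ((l : ℝ) - ∑ j, (q j : ℝ) * ((lat (i + k)) j : ℝ)) := by
          rw [Finset.sum_add_distrib, Finset.sum_sub_distrib]
      _ = ∑ i ∈ B, ((l : ℝ) - ∑ j, (q j : ℝ) * ((lat (i + k)) j : ℝ)) := by
          rw [hbij x]; ring
  -- the sum is an integer
  set N : ℤ := ∑ i ∈ B, (l - ∑ j, q j * (lat (i + k)) j) with hNdef
  have hSN : ∑ i ∈ B, (tau k l x i - x i) = (N : ℝ) := by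
    rw [hS, hNdef]
    push_cast
    rfl
  -- second computation: S = card B * (W k + l)
  have hterm : ∀ i : Fin d → ℤ, (l : ℝ) - ∑ j, (q j : ℝ) * ((lat (i + k)) j : ℝ)
      = (W i + (W k + (l : ℝ))) - W (red (i + k)) := by
    intro i
    have h1 : W (i + k) = W (red (i + k)) + W (p.mulVec (lat (i + k))) := by
      rw [← hWadd, ← hdec]
    rw [hWadd i k] at h1
    rw [hWlat] at h1
    linarith
  have hS2 : (N : ℝ) = (B.card : ℝ) * (W k + (l : ℝ)) := by
    rw [← hSN, hS]
    calc ∑ i ∈ B, ((l : ℝ) - ∑ j, (q j : ℝ) * ((lat (i + k)) j : ℝ))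
        = ∑ i ∈ B, ((W i + (W k + (l : ℝ))) - W (red (i + k))) :=
          Finset.sum_congr rfl fun i _ => hterm i
      _ = (∑ i ∈ B, W i + B.card * (W k + (l : ℝ))) - ∑ i ∈ B, W (red (i + k)) := by
          rw [Finset.sum_sub_distrib, Finset.sum_add_distrib, Finset.sum_const, nsmul_eq_mul]
      _ = (B.card : ℝ) * (W k + (l : ℝ)) := by rw [hbij W]; ring
  -- B is nonempty
  have h0B : (0 : Fin d → ℤ) ∈ B := by
    rw [hB]
    exact ⟨0, fun m => ⟨le_refl 0, zero_lt_one⟩, fun m => by simp⟩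
  have hcard : 0 < B.card := Finset.card_pos.2 ⟨0, h0B⟩
  have hWk : W k = ∑ m, ω m * (k m : ℝ) := rfl
  have hNne : N ≠ 0 := by
    intro h
    rw [h] at hS2
    simp only [Int.cast_zero] at hS2
    have : (B.card : ℝ) ≠ 0 := by exact_mod_cast hcard.ne'
    have := mul_eq_zero.mp hS2.symm
    rcases this with h' | h'
    · exact this h'
    · rw [hWk] at h'; exact hkl h'
  have hN1 : (1 : ℝ) ≤ |(N : ℝ)| := by
    have : 1 ≤ |N| := Int.one_le_abs hNne
    calc (1 : ℝ) = ((1 : ℤ) : ℝ) := by norm_num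
      _ ≤ ((|N| : ℤ) : ℝ) := by exact_mod_cast this
      _ = |(N : ℝ)| := by push_cast; ring
  calc (1 : ℝ) ≤ |(N : ℝ)| := hN1
    _ = |∑ i ∈ B, (tau k l x i - x i)| := by rw [hSN]
    _ ≤ ∑ i ∈ B, |tau k l x i - x i| := Finset.abs_sum_le_sum_abs _ _
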